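/- The particles transported with the LTP operator T̄_{h,(1)} φ⁰_{h,k}(x) := φ⁰_{h,k}(B̄_{(1),k}(x)) have a uniformly bounded overlapping: there exists a constant C depending only on ρ⁰ and d such that sup_{x∈ℝ^d} #{k ∈ ℤ^d : T̄_{h,(1)} φ⁰_{h,k}(x) ≠ 0} ≤ C (1 + h c_F)^d, where c_F := |F̄|₁² |B̄|₂. -/

import Mathlib

open scoped NNReal
open Set

/-- Grid node `x⁰_k := h k`. -/
noncomputable def node (d : ℕ) (h : ℝ) (k : Fin d → ℤ) : Fin d → ℝ :=
  fun i => h * (k i : ℝ)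

/-- Particle shape function `φ⁰_{h,k}(x) := h^{-d} φ(h⁻¹ x - k)`. -/
noncomputable def part (d : ℕ) (h : ℝ) (φ : (Fin d → ℝ) → ℝ)
    (k : Fin d → ℤ) (x : Fin d → ℝ) : ℝ :=
  (h ^ d)⁻¹ * φ (fun i => x i / h - (k i : ℝ))

/-- Partial derivative `∂_l g`. -/
noncomputable def pd (d : ℕ) (l : Fin d) (g : (Fin d → ℝ) → ℝ) : (Fin d → ℝ) → ℝ :=
  fun x => fderiv ℝ g x (Pi.single l 1)

/-- Linearized backward flow `B̄_{(1),k}(x) := x⁰_k + J_k⁻¹ (x − F̄(x⁰_k))`. -/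
noncomputable def B1 (d : ℕ) (h : ℝ) (F : (Fin d → ℝ) ≃ (Fin d → ℝ))
    (k : Fin d → ℤ) (x : Fin d → ℝ) : Fin d → ℝ :=
  node d h k +
    fderiv ℝ (F.symm : (Fin d → ℝ) → (Fin d → ℝ)) (F (node d h k)) (x - F (node d h k))

/-- decompose a CLM into Pi applied along basis -/
lemma clm_apply_eq_sum {d : ℕ} (T : (Fin d → ℝ) →L[ℝ] ℝ) (v : Fin d → ℝ) :
    T v = ∑ l : Fin d, v l * T (Pi.single l 1) := by
  have hv : v = ∑ l : Fin d, v l • (Pi.single l 1 : Fin d → ℝ) := by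
    funext j
    simp [Finset.sum_apply, Pi.single_apply, Finset.sum_ite_eq']
  conv_lhs => rw [hv]
  rw [map_sum]
  simp [smul_eq_mul]

lemma abs_clm_apply_le {d : ℕ} (T : (Fin d → ℝ) →L[ℝ] ℝ) (v : Fin d → ℝ) (L : ℝ)
    (hL : ∑ l : Fin d, |T (Pi.single l 1)| ≤ L) : |T v| ≤ L * ‖v‖ := by
  rw [clm_apply_eq_sum]
  calc |∑ l : Fin d, v l * T (Pi.single l 1)| ≤ ∑ l : Fin d, |v l * T (Pi.single l 1)| :=
        Finset.abs_sum_le_sum_abs _ _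
    _ ≤ ∑ l : Fin d, ‖v‖ * |T (Pi.single l 1)| := by
        refine Finset.sum_le_sum fun l _ => ?_
        rw [abs_mul]
        exact mul_le_mul_of_nonneg_right (norm_le_pi_norm v l) (abs_nonneg _)
    _ = (∑ l : Fin d, |T (Pi.single l 1)|) * ‖v‖ := by rw [← Finset.mul_sum, mul_comm]
    _ ≤ L * ‖v‖ := by
        apply mul_le_mul_of_nonneg_right _ (norm_nonneg v)
        exact hL

/-- component of fderiv of a Pi-valued map -/
lemma fderiv_component {d : ℕ} (f : (Fin d → ℝ) → (Fin d → ℝ)) (x : Fin d → ℝ)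
    (hf : DifferentiableAt ℝ f x) (v : Fin d → ℝ) (i : Fin d) :
    fderiv ℝ (fun y => f y i) x v = fderiv ℝ f x v i := by
  have h := hasFDerivAt_pi'.1 hf.hasFDerivAt i
  rw [h.fderiv]
  rfl

/-- operator bound for a Pi→Pi CLM with row sums bounded -/
lemma pi_clm_apply_le {d : ℕ} (hd : 0 < d) (T : (Fin d → ℝ) →L[ℝ] (Fin d → ℝ)) (L : ℝ)
    (hL : ∀ i : Fin d, ∑ l : Fin d, |T (Pi.single l 1) i| ≤ L) (v : Fin d → ℝ) :
    ‖T v‖ ≤ L * ‖v‖ := by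
  have hL0 : 0 ≤ L := le_trans (Finset.sum_nonneg fun l _ => abs_nonneg _)
    (hL ⟨0, hd⟩)
  rw [show T v = fun i => T v i from rfl]
  refine (pi_norm_le_iff_of_nonneg (by positivity)).2 fun i => ?_
  have : (fun w => T w i) = ((ContinuousLinearMap.proj i : (Fin d → ℝ) →L[ℝ] ℝ).comp T) := rfl
  calc |T v i| = |((ContinuousLinearMap.proj i : (Fin d → ℝ) →L[ℝ] ℝ).comp T) v| := rfl
    _ ≤ L * ‖v‖ := abs_clm_apply_le _ v L (by simpa using hL i)

/-- scalar mean value: row-sum bound on gradient gives Lipschitz bound -/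
lemma scalar_mvt {d : ℕ} (g : (Fin d → ℝ) → ℝ) (hg : Differentiable ℝ g) (L : ℝ)
    (hL : ∀ y, ∑ l : Fin d, |pd d l g y| ≤ L) (a b : Fin d → ℝ) :
    |g a - g b| ≤ L * ‖a - b‖ := by
  have := convex_univ.norm_image_sub_le_of_norm_fderiv_le (f := g) (C := L)
    (fun y _ => (hg y)) (fun y _ => ?_) (mem_univ b) (mem_univ a)
  · simpa using this
  · apply ContinuousLinearMap.opNorm_le_bound
    · exact le_trans (Finset.sum_nonneg fun l _ => abs_nonneg _) (hL y)
    · intro v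
      exact abs_clm_apply_le _ v L (hL y)

lemma pd_differentiable {d : ℕ} (g : (Fin d → ℝ) → ℝ) (hg : ContDiff ℝ 2 g) (l : Fin d) :
    Differentiable ℝ (pd d l g) := by
  have h1 : ContDiff ℝ 1 (fderiv ℝ g) := hg.fderiv_right (by norm_num)
  have := ((ContinuousLinearMap.apply ℝ ℝ (Pi.single l 1 : Fin d → ℝ)).contDiff.comp h1)
  exact this.differentiable one_ne_zero

lemma pd_sum_smul {d : ℕ} (g : Fin d → (Fin d → ℝ) → ℝ) (hg : ∀ j, Differentiable ℝ (g j))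
    (c : Fin d → ℝ) (l : Fin d) (y : Fin d → ℝ) :
    pd d l (fun w => ∑ j : Fin d, c j * g j w) y = ∑ j : Fin d, c j * pd d l (g j) y := by
  unfold pd
  rw [fderiv_fun_sum (fun j _ => ((hg j).differentiableAt.const_mul (c j)))]
  rw [ContinuousLinearMap.sum_apply]
  congr 1
  funext j
  rw [fderiv_const_mul (hg j).differentiableAt]
  rfl

lemma DB_lipschitz {d : ℕ} (hd : 0 < d) (B : (Fin d → ℝ) → (Fin d → ℝ)) (hB : ContDiff ℝ 2 B)
    (cB2 : ℝ)
    (hcB : ∀ (i : Fin d) (x : Fin d → ℝ),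
      ∑ l1 : Fin d, ∑ l2 : Fin d, |pd d l1 (pd d l2 (fun y => B y i)) x| ≤ cB2)
    (a b : Fin d → ℝ) :
    ‖fderiv ℝ B a - fderiv ℝ B b‖ ≤ cB2 * ‖a - b‖ := by
  have hcB0 : 0 ≤ cB2 := le_trans
    (Finset.sum_nonneg fun l1 _ => Finset.sum_nonneg fun l2 _ => abs_nonneg _)
    (hcB ⟨0, hd⟩ a)
  have hBdiff : Differentiable ℝ B := hB.differentiable (by norm_num)
  apply ContinuousLinearMap.opNorm_le_bound _ (by positivity)
  intro v
  rw [ContinuousLinearMap.sub_apply]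
  have key : ∀ i : Fin d,
      |fderiv ℝ B a v i - fderiv ℝ B b v i| ≤ (cB2 * ‖v‖) * ‖a - b‖ := by
    intro i
    have hgi : ContDiff ℝ 2 (fun y => B y i) := by
      have := contDiff_pi.1 hB
      exact this i
    set ψ : (Fin d → ℝ) → ℝ :=
      fun w => ∑ l2 : Fin d, v l2 * pd d l2 (fun y => B y i) w with hψdef
    have hψval : ∀ y, fderiv ℝ B y v i = ψ y := by
      intro y
      rw [← fderiv_component B y (hBdiff y) v i, clm_apply_eq_sum]
      rfl
    have hψdiff : Differentiable ℝ ψ :=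
      Differentiable.fun_sum fun l2 _ => (pd_differentiable _ hgi l2).const_mul (v l2)
    have hψbound : ∀ y, ∑ l : Fin d, |pd d l ψ y| ≤ cB2 * ‖v‖ := by
      intro y
      have hpd : ∀ l : Fin d, pd d l ψ y
          = ∑ l2 : Fin d, v l2 * pd d l (pd d l2 (fun w => B w i)) y := fun l =>
        pd_sum_smul _ (fun j => pd_differentiable _ hgi j) v l y
      calc ∑ l : Fin d, |pd d l ψ y|
          ≤ ∑ l : Fin d, ∑ l2 : Fin d, ‖v‖ * |pd d l (pd d l2 (fun w => B w i)) y| := by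
            refine Finset.sum_le_sum fun l _ => ?_
            rw [hpd l]
            refine le_trans (Finset.abs_sum_le_sum_abs _ _) (Finset.sum_le_sum fun l2 _ => ?_)
            rw [abs_mul]
            exact mul_le_mul_of_nonneg_right (norm_le_pi_norm v l2) (abs_nonneg _)
        _ = ‖v‖ * ∑ l : Fin d, ∑ l2 : Fin d, |pd d l (pd d l2 (fun w => B w i)) y| := by
            rw [Finset.mul_sum]; congr 1; funext l; rw [Finset.mul_sum]
        _ ≤ ‖v‖ * cB2 := mul_le_mul_of_nonneg_left (hcB i y) (norm_nonneg v)
        _ = cB2 * ‖v‖ := mul_comm _ _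
    have := scalar_mvt ψ hψdiff (cB2 * ‖v‖) hψbound a b
    rw [hψval a, hψval b]
    exact this
  calc ‖(fderiv ℝ B a v) - (fderiv ℝ B b v)‖ ≤ (cB2 * ‖v‖) * ‖a - b‖ := by
        refine (pi_norm_le_iff_of_nonneg (by positivity)).2 fun i => ?_
        exact key i
    _ = cB2 * ‖a - b‖ * ‖v‖ := by ring

lemma taylor_bound {d : ℕ} (hd : 0 < d) (B : (Fin d → ℝ) → (Fin d → ℝ)) (hB : ContDiff ℝ 2 B)
    (cB2 : ℝ)
    (hcB : ∀ (i : Fin d) (x : Fin d → ℝ),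
      ∑ l1 : Fin d, ∑ l2 : Fin d, |pd d l1 (pd d l2 (fun y => B y i)) x| ≤ cB2)
    (a b : Fin d → ℝ) :
    ‖B a - B b - fderiv ℝ B b (a - b)‖ ≤ cB2 * ‖a - b‖ ^ 2 := by
  have hBdiff : Differentiable ℝ B := hB.differentiable (by norm_num)
  set g : (Fin d → ℝ) → (Fin d → ℝ) := fun y => B y - fderiv ℝ B b y with hg
  have hgdiff : Differentiable ℝ g :=
    hBdiff.sub (fderiv ℝ B b).differentiable
  have hgderiv : ∀ y, fderiv ℝ g y = fderiv ℝ B y - fderiv ℝ B b := by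
    intro y
    rw [hg]
    rw [fderiv_fun_sub (hBdiff y) (fderiv ℝ B b).differentiableAt]
    rw [(fderiv ℝ B b).fderiv]
  have hball : a ∈ Metric.closedBall b ‖a - b‖ := by
    simp [Metric.mem_closedBall, dist_eq_norm]
  have hbound : ∀ y ∈ Metric.closedBall b ‖a - b‖,
      ‖fderiv ℝ g y‖ ≤ cB2 * ‖a - b‖ := by
    intro y hy
    rw [hgderiv y]
    refine le_trans (DB_lipschitz hd B hB cB2 hcB y b) ?_
    have hcB0 : 0 ≤ cB2 := le_trans
      (Finset.sum_nonneg fun l1 _ => Finset.sum_nonneg fun l2 _ => abs_nonneg _)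
      (hcB ⟨0, hd⟩ a)
    have : ‖y - b‖ ≤ ‖a - b‖ := by
      rw [Metric.mem_closedBall, dist_eq_norm] at hy
      exact hy
    exact mul_le_mul_of_nonneg_left this hcB0
  have hkey := (convex_closedBall b ‖a - b‖).norm_image_sub_le_of_norm_fderiv_le
    (f := g) (C := cB2 * ‖a - b‖) (fun y _ => hgdiff y)
    hbound (Metric.mem_closedBall_self (norm_nonneg _)) hball
  have hgab : g a - g b = B a - B b - fderiv ℝ B b (a - b) := by
    rw [hg]
    simp only [map_sub]
    abel
  rw [hgab] at hkey
  calc ‖B a - B b - fderiv ℝ B b (a - b)‖ ≤ cB2 * ‖a - b‖ * ‖a - b‖ := hkey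
    _ = cB2 * ‖a - b‖ ^ 2 := by ring

/-- particles transported with the LTP operator have uniformly bounded
overlapping: `sup_x #{k : T̄_{h,(1)} φ⁰_{h,k}(x) ≠ 0} ≤ C (1 + h c_F)^d` with
`c_F := |F̄|₁² |B̄|₂` and `C = C(ρ⁰, d)`. -/
theorem LTP_bounded_overlapping
    (d : ℕ) (hd : 1 ≤ d) (ρ0 : ℝ) (hρ0 : 0 < ρ0) :
    ∃ C : ℝ, 0 < C ∧
      ∀ (h : ℝ), 0 < h →
      ∀ (φ : (Fin d → ℝ) → ℝ) (Lφ : ℝ≥0), LipschitzWith Lφ φ →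
        (∀ x, φ x ≠ 0 → ‖x‖ ≤ ρ0) →
      ∀ (F : (Fin d → ℝ) ≃ (Fin d → ℝ)),
        ContDiff ℝ 1 (F : (Fin d → ℝ) → (Fin d → ℝ)) →
        ContDiff ℝ 2 (F.symm : (Fin d → ℝ) → (Fin d → ℝ)) →
      ∀ (cF1 : ℝ), (∀ (i : Fin d) (x : Fin d → ℝ),
          ∑ l : Fin d, |pd d l (fun y => F y i) x| ≤ cF1) →
      ∀ (cB2 : ℝ), (∀ (i : Fin d) (x : Fin d → ℝ),
          ∑ l1 : Fin d, ∑ l2 : Fin d,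
            |pd d l1 (pd d l2 (fun y => F.symm y i)) x| ≤ cB2) →
      ∀ x : Fin d → ℝ,
        {k : Fin d → ℤ | part d h φ k (B1 d h F k x) ≠ 0}.Finite ∧
        (({k : Fin d → ℤ | part d h φ k (B1 d h F k x) ≠ 0}).ncard : ℝ)
          ≤ C * (1 + h * (cF1 ^ 2 * cB2)) ^ d := by
  refine ⟨(1 + 4*ρ0 + 16*ρ0^2) ^ d, by positivity, ?_⟩
  intro h hh φ Lφ hLφ hsupp F hF hB2 cF1 hcF cB2 hcB x
  have hd0 : 0 < d := hd
  have hcF0 : 0 ≤ cF1 :=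
    le_trans (Finset.sum_nonneg fun l _ => abs_nonneg _) (hcF ⟨0, hd0⟩ x)
  have hcB0 : 0 ≤ cB2 := le_trans
    (Finset.sum_nonneg fun l1 _ => Finset.sum_nonneg fun l2 _ => abs_nonneg _)
    (hcB ⟨0, hd0⟩ x)
  have hq0 : 0 ≤ h * (cF1 ^ 2 * cB2) := by positivity
  have hBdiff : Differentiable ℝ (F.symm : (Fin d → ℝ) → (Fin d → ℝ)) :=
    hB2.differentiable (by norm_num)
  have hFdiff : Differentiable ℝ (F : (Fin d → ℝ) → (Fin d → ℝ)) :=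
    hF.differentiable one_ne_zero
  set S := {k : Fin d → ℤ | part d h φ k (B1 d h F k x) ≠ 0} with hSdef
  -- Step 1
  have hB1sub : ∀ k : Fin d → ℤ, B1 d h F k x - node d h k
      = fderiv ℝ (F.symm : (Fin d → ℝ) → (Fin d → ℝ)) (F (node d h k)) (x - F (node d h k)) := by
    intro k
    simp [B1]
  have hstep1 : ∀ k ∈ S, ‖B1 d h F k x - node d h k‖ ≤ h * ρ0 := by
    intro k hk
    have hφ : φ (fun i => (B1 d h F k x) i / h - (k i : ℝ)) ≠ 0 := by
      intro h0
      exact hk (by simp [part, h0])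
    have hn := hsupp _ hφ
    have heq : B1 d h F k x - node d h k
        = h • (fun i => (B1 d h F k x) i / h - (k i : ℝ)) := by
      funext i
      simp only [Pi.sub_apply, Pi.smul_apply, smul_eq_mul, node]
      field_simp
    rw [heq, norm_smul, Real.norm_eq_abs, abs_of_pos hh]
    exact mul_le_mul_of_nonneg_left hn hh.le
  -- row bound for fderiv F
  have hrowF : ∀ (y v : Fin d → ℝ), ‖fderiv ℝ (F : (Fin d → ℝ) → (Fin d → ℝ)) y v‖ ≤ cF1 * ‖v‖ := by
    intro y v
    refine pi_clm_apply_le hd0 _ cF1 (fun i => ?_) v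
    have he : ∀ l : Fin d, fderiv ℝ (F : (Fin d → ℝ) → (Fin d → ℝ)) y (Pi.single l 1) i
        = pd d l (fun w => F w i) y := fun l =>
      (fderiv_component (F : (Fin d → ℝ) → (Fin d → ℝ)) y (hFdiff y) _ i).symm
    calc ∑ l : Fin d, |fderiv ℝ (F : (Fin d → ℝ) → (Fin d → ℝ)) y (Pi.single l 1) i|
        = ∑ l : Fin d, |pd d l (fun w => F w i) y| := by
          refine Finset.sum_congr rfl fun l _ => ?_
          rw [he l]
      _ ≤ cF1 := hcF i y
  -- Step 2
  have hstep2 : ∀ k ∈ S, ‖x - F (node d h k)‖ ≤ cF1 * (h * ρ0) := by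
    intro k hk
    have e1 : F.symm (F (node d h k)) = node d h k := F.symm_apply_apply _
    have hcomp : ((F : (Fin d → ℝ) → (Fin d → ℝ)) ∘ (F.symm : (Fin d → ℝ) → (Fin d → ℝ))) = id :=
      funext fun w => F.apply_symm_apply w
    have hch := fderiv_comp (𝕜 := ℝ) (F (node d h k))
      (g := (F : (Fin d → ℝ) → (Fin d → ℝ))) (f := (F.symm : (Fin d → ℝ) → (Fin d → ℝ)))
      (hFdiff _) (hBdiff _)
    rw [hcomp, fderiv_id, e1] at hch
    have hid := DFunLike.congr_fun hch.symm (x - F (node d h k))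
    simp only [ContinuousLinearMap.coe_comp', Function.comp_apply,
      ContinuousLinearMap.coe_id', id_eq] at hid
    calc ‖x - F (node d h k)‖
        = ‖fderiv ℝ (F : (Fin d → ℝ) → (Fin d → ℝ)) (node d h k)
            (fderiv ℝ (F.symm : (Fin d → ℝ) → (Fin d → ℝ)) (F (node d h k))
              (x - F (node d h k)))‖ := by rw [hid]
      _ ≤ cF1 * ‖fderiv ℝ (F.symm : (Fin d → ℝ) → (Fin d → ℝ)) (F (node d h k))
            (x - F (node d h k))‖ := hrowF _ _
      _ ≤ cF1 * (h * ρ0) := by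
          refine mul_le_mul_of_nonneg_left ?_ hcF0
          rw [← hB1sub k]
          exact hstep1 k hk
  -- pairwise bound
  set R : ℝ := 2*ρ0 + 6*ρ0^2*(h*(cF1^2*cB2)) with hRdef
  have hR0 : 0 ≤ R := by positivity
  have hpair : ∀ k ∈ S, ∀ k' ∈ S, ∀ i : Fin d, |(k i : ℝ) - (k' i : ℝ)| ≤ R := by
    intro k hk k' hk' i
    set a := F (node d h k) with ha
    set b := F (node d h k') with hb
    set r := cF1 * (h * ρ0) with hr
    have hr0 : 0 ≤ r := by positivity
    have hax : ‖a - x‖ ≤ r := by rw [norm_sub_rev]; exact hstep2 k hk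
    have hbx : ‖x - b‖ ≤ r := hstep2 k' hk'
    have hab : ‖a - b‖ ≤ 2 * r := by
      calc ‖a - b‖ = ‖(a - x) + (x - b)‖ := by abel_nf
        _ ≤ ‖a - x‖ + ‖x - b‖ := norm_add_le _ _
        _ ≤ 2 * r := by linarith
    set Bm := (F.symm : (Fin d → ℝ) → (Fin d → ℝ)) with hBm
    set Ta := fderiv ℝ Bm a with hTa
    set Tb := fderiv ℝ Bm b with hTb
    have hQ : ‖Bm a - Bm b - Tb (a - b)‖ ≤ cB2 * (2*r)^2 := by
      refine le_trans (taylor_bound hd0 Bm hB2 cB2 hcB a b) ?_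
      have : ‖a - b‖^2 ≤ (2*r)^2 := by
        apply pow_le_pow_left₀ (norm_nonneg _) hab
      exact mul_le_mul_of_nonneg_left this hcB0
    have hT1 : ‖Ta (x - a)‖ ≤ h * ρ0 := by
      rw [hTa, ha, ← hB1sub k]
      exact hstep1 k hk
    have hT3 : ‖Tb (x - b)‖ ≤ h * ρ0 := by
      rw [hTb, hb, ← hB1sub k']
      exact hstep1 k' hk'
    have hTdiff : ‖(Tb - Ta) (a - x)‖ ≤ cB2 * (2*r) * r := by
      calc ‖(Tb - Ta) (a - x)‖ ≤ ‖Tb - Ta‖ * ‖a - x‖ := (Tb - Ta).le_opNorm _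
        _ ≤ (cB2 * ‖b - a‖) * ‖a - x‖ := by
            refine mul_le_mul_of_nonneg_right ?_ (norm_nonneg _)
            exact DB_lipschitz hd0 Bm hB2 cB2 hcB b a
        _ ≤ cB2 * (2*r) * r := by
            have h1 : ‖b - a‖ ≤ 2 * r := by rw [norm_sub_rev]; exact hab
            have h2 : ‖a - x‖ ≤ r := hax
            have : cB2 * ‖b - a‖ ≤ cB2 * (2*r) := mul_le_mul_of_nonneg_left h1 hcB0
            exact mul_le_mul this h2 (norm_nonneg _) (by positivity)
    have hnode : node d h k - node d h k' = Bm a - Bm b := by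
      rw [hBm, ha, hb, F.symm_apply_apply, F.symm_apply_apply]
    have hdecomp : Bm a - Bm b
        = (Bm a - Bm b - Tb (a - b)) + (-(Ta (x - a)) + (Tb - Ta) (a - x)) + Tb (x - b) := by
      have e1 : Tb (a - b) = Tb (a - x) + Tb (x - b) := by
        rw [← map_add]; congr 1; abel
      have e2 : Tb (a - x) = -(Ta (x - a)) + (Tb - Ta) (a - x) := by
        rw [ContinuousLinearMap.sub_apply]
        have : Ta (a - x) = -(Ta (x - a)) := by rw [← map_neg]; congr 1; abel
        rw [← this]; abel
      rw [e1, e2]; abel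
    have hnorm : ‖node d h k - node d h k'‖ ≤ h * R := by
      rw [hnode, hdecomp]
      calc ‖(Bm a - Bm b - Tb (a - b)) + (-(Ta (x - a)) + (Tb - Ta) (a - x)) + Tb (x - b)‖
          ≤ ‖(Bm a - Bm b - Tb (a - b)) + (-(Ta (x - a)) + (Tb - Ta) (a - x))‖ + ‖Tb (x - b)‖ :=
            norm_add_le _ _
        _ ≤ ‖Bm a - Bm b - Tb (a - b)‖ + ‖-(Ta (x - a)) + (Tb - Ta) (a - x)‖ + ‖Tb (x - b)‖ := by
            have := norm_add_le (Bm a - Bm b - Tb (a - b)) (-(Ta (x - a)) + (Tb - Ta) (a - x))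
            linarith
        _ ≤ ‖Bm a - Bm b - Tb (a - b)‖ + (‖Ta (x - a)‖ + ‖(Tb - Ta) (a - x)‖) + ‖Tb (x - b)‖ := by
            have := norm_add_le (-(Ta (x - a))) ((Tb - Ta) (a - x))
            rw [norm_neg] at this
            linarith
        _ ≤ cB2 * (2*r)^2 + (h * ρ0 + cB2 * (2*r) * r) + (h * ρ0) := by
            have := hQ; have := hT1; have := hT3; have := hTdiff
            linarith
        _ = h * R := by rw [hRdef, hr]; ring
    have hcomp_i : |h * (k i : ℝ) - h * (k' i : ℝ)| ≤ h * R := by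
      have := norm_le_pi_norm (node d h k - node d h k') i
      simp only [Pi.sub_apply, node, Real.norm_eq_abs] at this
      exact le_trans this hnorm
    have habs : |h * ((k i : ℝ) - (k' i : ℝ))| = h * |(k i : ℝ) - (k' i : ℝ)| := by
      rw [abs_mul, abs_of_pos hh]
    have hmain : h * |(k i : ℝ) - (k' i : ℝ)| ≤ h * R := by
      rw [← habs, show h * ((k i : ℝ) - (k' i : ℝ)) = h * (k i : ℝ) - h * (k' i : ℝ) from by ring]
      exact hcomp_i
    exact le_of_mul_le_mul_left hmain hh
  -- counting
  rcases Set.eq_empty_or_nonempty S with hSe | ⟨k0, hk0⟩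
  · rw [hSe]
    refine ⟨Set.finite_empty, ?_⟩
    simp only [Set.ncard_empty, Nat.cast_zero]
    positivity
  · set N : ℤ := ⌊R⌋ with hN
    have hN0 : 0 ≤ N := Int.le_floor.2 (by simpa using hR0)
    have hsub : S ⊆ ↑(Fintype.piFinset fun i : Fin d => Finset.Icc (k0 i - N) (k0 i + N)) := by
      intro k hk
      simp only [Finset.coe_sort_coe, Finset.mem_coe, Fintype.mem_piFinset, Finset.mem_Icc]
      intro i
      have h1 := hpair k hk k0 hk0 i
      have h2 : -R ≤ (k i : ℝ) - (k0 i : ℝ) ∧ (k i : ℝ) - (k0 i : ℝ) ≤ R := abs_le.1 h1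
      have hlow : -(k i - k0 i) ≤ N := Int.le_floor.2 (by push_cast; linarith [h2.1])
      have hhigh : k i - k0 i ≤ N := Int.le_floor.2 (by push_cast; linarith [h2.2])
      omega
    have hfin : S.Finite := Set.Finite.subset (Finset.finite_toSet _) hsub
    refine ⟨hfin, ?_⟩
    have hcard : S.ncard ≤ (Fintype.piFinset fun i : Fin d =>
        Finset.Icc (k0 i - N) (k0 i + N)).card := by
      rw [← Set.ncard_coe_finset]
      exact Set.ncard_le_ncard hsub (Finset.finite_toSet _)
    have hcardval : (Fintype.piFinset fun i : Fin d =>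
        Finset.Icc (k0 i - N) (k0 i + N)).card = ((2*N+1).toNat)^d := by
      rw [Fintype.card_piFinset]
      have hc : ∀ i : Fin d, (Finset.Icc (k0 i - N) (k0 i + N)).card = (2*N+1).toNat := by
        intro i; rw [Int.card_Icc]; congr 1; ring
      rw [Finset.prod_congr rfl fun i _ => hc i, Finset.prod_const, Finset.card_univ,
        Fintype.card_fin]
    have htoNat : ((2*N+1).toNat : ℝ) = 2*(N:ℝ)+1 := by
      have h1 : (0:ℤ) ≤ 2*N+1 := by omega
      have h2 : ((2*N+1).toNat : ℤ) = 2*N+1 := Int.toNat_of_nonneg h1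
      calc ((2*N+1).toNat : ℝ) = ((((2*N+1).toNat : ℤ)) : ℝ) := by push_cast; ring
        _ = ((2*N+1 : ℤ) : ℝ) := by rw [h2]
        _ = 2*(N:ℝ)+1 := by push_cast; ring
    have hNR : (N:ℝ) ≤ R := Int.floor_le R
    have hchain : (S.ncard : ℝ) ≤ (2*(N:ℝ)+1)^d := by
      calc (S.ncard : ℝ) ≤ ((((2*N+1).toNat)^d : ℕ) : ℝ) := by
            exact_mod_cast le_trans hcard (le_of_eq hcardval)
        _ = ((2*N+1).toNat : ℝ)^d := by push_cast; ring
        _ = (2*(N:ℝ)+1)^d := by rw [htoNat]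
    have hfinal : (2*(N:ℝ)+1)^d ≤ (1 + 4*ρ0 + 16*ρ0^2)^d * (1 + h * (cF1 ^ 2 * cB2))^d := by
      rw [← mul_pow]
      have hN0R : (0:ℝ) ≤ (N:ℝ) := by exact_mod_cast hN0
      refine pow_le_pow_left₀ (by linarith) ?_ d
      have h2R : 2*(N:ℝ)+1 ≤ 2*R+1 := by linarith
      refine le_trans h2R ?_
      rw [hRdef]
      nlinarith [hq0, hρ0, sq_nonneg ρ0]
    exact le_trans hchain hfinal
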